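/- Let V_w ∈ R^{N×k} have full QR decomposition V_w = (F₁ F₂)(Rᵀ 0ᵀ)ᵀ with (F₁ F₂) orthogonal and R invertible. Let Φ_w ∈ R^{N×N} be symmetric PSD, n, λ > 0, and Y ∈ R^N. Define β̂_w = F₂(F₂ᵀΦ_w F₂ + nλI)^{-1}F₂ᵀY and α̂ = R^{-1}(F₁ᵀY − F₁ᵀΦ_w β̂_w). Then (α̂, β̂_w) solve the system V_wᵀ β̂_w = 0 and Y − V_w α̂ − (Φ_w + nλI) β̂_w = 0. -/

import Mathlib

open Matrix

/-- The explicit solution (α̂, β̂_w) from the QR decomposition solves the system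
V_wᵀβ̂_w = 0 and Y − V_wα̂ − (Φ_w + nλI)β̂_w = 0. -/
theorem qr_solution_solves_system {N k m : ℕ}
    (F₁ : Matrix (Fin N) (Fin k) ℝ) (F₂ : Matrix (Fin N) (Fin m) ℝ)
    (hF₁ : F₁ᵀ * F₁ = 1) (hF₂ : F₂ᵀ * F₂ = 1) (hF₁₂ : F₁ᵀ * F₂ = 0)
    (hcomplete : F₁ * F₁ᵀ + F₂ * F₂ᵀ = 1)
    (R : Matrix (Fin k) (Fin k) ℝ) (hR : IsUnit R.det)
    (Vw : Matrix (Fin N) (Fin k) ℝ) (hVw : Vw = F₁ * R)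
    (Φw : Matrix (Fin N) (Fin N) ℝ) (hΦw : Φw.PosSemidef)
    (n lam : ℝ) (hn : 0 < n) (hlam : 0 < lam)
    (Y : Matrix (Fin N) (Fin 1) ℝ)
    (βw : Matrix (Fin N) (Fin 1) ℝ)
    (hβw : βw = F₂ * (F₂ᵀ * Φw * F₂ + (n * lam) • 1)⁻¹ * F₂ᵀ * Y)
    (α : Matrix (Fin k) (Fin 1) ℝ)
    (hα : α = R⁻¹ * (F₁ᵀ * Y - F₁ᵀ * Φw * βw)) :
    Vwᵀ * βw = 0 ∧ Y - Vw * α - (Φw + (n * lam) • 1) * βw = 0 := by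
  set M : Matrix (Fin m) (Fin m) ℝ := F₂ᵀ * Φw * F₂ + (n * lam) • 1 with hM
  have hPSD : (F₂ᵀ * Φw * F₂).PosSemidef := by
    have := hΦw.conjTranspose_mul_mul_same F₂
    simpa [conjTranspose_eq_transpose_of_trivial] using this
  have hsm : ((n * lam) • (1 : Matrix (Fin m) (Fin m) ℝ)).PosDef := by
    rw [smul_one_eq_diagonal]
    exact posDef_diagonal_iff.mpr fun _ => mul_pos hn hlam
  have hMpd : M.PosDef := by
    rw [hM, add_comm]
    exact hsm.add_posSemidef hPSD
  have hMinv : M * M⁻¹ = 1 := Matrix.mul_nonsing_inv M hMpd.det_pos.ne'.isUnit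
  have hRinv : R * R⁻¹ = 1 := Matrix.mul_nonsing_inv R hR
  constructor
  · rw [hVw, hβw]
    calc (F₁ * R)ᵀ * (F₂ * M⁻¹ * F₂ᵀ * Y)
        = Rᵀ * ((F₁ᵀ * F₂) * (M⁻¹ * F₂ᵀ * Y)) := by
          simp only [transpose_mul, Matrix.mul_assoc]
      _ = 0 := by rw [hF₁₂]; simp
  · have h1 : Vw * α = F₁ * (F₁ᵀ * Y - F₁ᵀ * Φw * βw) := by
      rw [hVw, hα, Matrix.mul_assoc, ← Matrix.mul_assoc R, hRinv, Matrix.one_mul]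
    have h2 : F₂ᵀ * βw = M⁻¹ * F₂ᵀ * Y := by
      rw [hβw]
      rw [← Matrix.mul_assoc, ← Matrix.mul_assoc, ← Matrix.mul_assoc, hF₂, Matrix.one_mul]
    have key : (Φw + (n * lam) • 1) * βw - F₁ * (F₁ᵀ * Φw * βw) = F₂ * F₂ᵀ * Y := by
      have e1 : (Φw + (n * lam) • 1) * βw - F₁ * (F₁ᵀ * Φw * βw)
          = (1 - F₁ * F₁ᵀ) * (Φw * βw) + (n * lam) • βw := by
        simp only [Matrix.add_mul, Matrix.sub_mul, Matrix.one_mul, Matrix.smul_mul,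
          Matrix.mul_assoc]
        abel
      have e2 : (1 : Matrix (Fin N) (Fin N) ℝ) - F₁ * F₁ᵀ = F₂ * F₂ᵀ := by
        rw [← hcomplete]; abel
      rw [e1, e2]
      have hz : βw = F₂ * (M⁻¹ * (F₂ᵀ * Y)) := by rw [hβw]; simp only [Matrix.mul_assoc]
      rw [hz]
      have : F₂ * F₂ᵀ * (Φw * (F₂ * (M⁻¹ * (F₂ᵀ * Y)))) + (n * lam) • (F₂ * (M⁻¹ * (F₂ᵀ * Y)))
          = F₂ * (M * (M⁻¹ * (F₂ᵀ * Y))) := by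
        rw [hM, Matrix.add_mul, Matrix.mul_add]
        congr 1
        · simp only [Matrix.mul_assoc]
        · rw [Matrix.smul_mul, Matrix.one_mul, Matrix.mul_smul]
      rw [this, ← Matrix.mul_assoc M, hMinv, Matrix.one_mul, Matrix.mul_assoc]
    have expand : Y - Vw * α - (Φw + (n * lam) • 1) * βw
        = Y - F₁ * (F₁ᵀ * Y) - F₂ * F₂ᵀ * Y := by
      rw [h1, Matrix.mul_sub]
      rw [← key]
      abel
    rw [expand, ← Matrix.mul_assoc]
    have : F₁ * F₁ᵀ * Y + F₂ * F₂ᵀ * Y = Y := by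
      rw [← Matrix.add_mul, hcomplete, Matrix.one_mul]
    linear_combination (norm := abel) this.symm
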